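/- Let Q be an n×n Q-matrix and let ρ, ρ̃ be two solutions of the ODE ρ' = Qᵀ ρ. Then the weighted ℓ¹-distance Σ_i |ρ_i(t) − ρ̃_i(t)| is nonincreasing in t. -/

import Mathlib

open Asymptotics Filter Set Topology

lemma abs_hasDerivWithinAt_right {f : ℝ → ℝ} {f' x : ℝ} (hf : HasDerivAt f f' x) :
    HasDerivWithinAt (fun z => |f z|)
      (if f x = 0 then |f'| else Real.sign (f x) * f') (Ici x) x := by
  by_cases hx : f x = 0
  · simp only [hx, if_pos rfl]
    rw [hasDerivWithinAt_iff_isLittleO]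
    have h := hf.hasDerivWithinAt (s := Ici x)
    rw [hasDerivWithinAt_iff_isLittleO] at h
    have hb : (fun z => |f z| - |f x| - (z - x) • |f'|) =O[𝓝[Ici x] x]
        (fun z => f z - f x - (z - x) • f') := by
      apply IsBigO.of_bound 1
      filter_upwards [self_mem_nhdsWithin] with z (hz : x ≤ z)
      rw [one_mul]
      simp only [hx, abs_zero, sub_zero, smul_eq_mul, Real.norm_eq_abs]
      have h1 : (z - x) * |f'| = |(z - x) * f'| := by
        rw [abs_mul, abs_of_nonneg (sub_nonneg.2 hz)]
      rw [h1]
      exact abs_abs_sub_abs_le_abs_sub (f z) ((z - x) * f')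
    exact hb.trans_isLittleO h
  · simp only [if_neg hx]
    rcases lt_or_gt_of_ne hx with hneg | hpos
    · have : (fun z => |f z|) =ᶠ[𝓝 x] fun z => -f z := by
        have : ∀ᶠ z in 𝓝 x, f z < 0 :=
          hf.continuousAt.eventually_lt_const hneg
        filter_upwards [this] with z hz using abs_of_neg hz
      have hd : HasDerivAt (fun z => |f z|) (-f') x :=
        (hf.neg.congr_of_eventuallyEq this)
      rw [Real.sign_of_neg hneg]
      simpa using hd.hasDerivWithinAt
    · have : (fun z => |f z|) =ᶠ[𝓝 x] f := by
        have : ∀ᶠ z in 𝓝 x, 0 < f z :=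
          hf.continuousAt.eventually_const_lt hpos
        filter_upwards [this] with z hz using abs_of_pos hz
      have hd : HasDerivAt (fun z => |f z|) f' x :=
        hf.congr_of_eventuallyEq this
      rw [Real.sign_of_pos hpos, one_mul]
      exact hd.hasDerivWithinAt

lemma qmatrix_key {n : ℕ} (Q : Matrix (Fin n) (Fin n) ℝ)
    (hQoff : ∀ i j, i ≠ j → 0 ≤ Q i j)
    (hQrow : ∀ i, ∑ j, Q i j = 0)
    (w ε : Fin n → ℝ) (hε1 : ∀ i, |ε i| ≤ 1) (hεw : ∀ i, ε i * w i = |w i|) :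
    ∑ i, ε i * ∑ j, Q j i * w j ≤ 0 := by
  have hswap : ∑ i, ε i * ∑ j, Q j i * w j = ∑ j, ∑ i, Q j i * (ε i * w j) := by
    rw [Finset.sum_comm]
    congr 1; ext j
    rw [Finset.mul_sum]
    congr 1; ext i
    ring
  rw [hswap]
  have hj : ∀ j : Fin n, ∑ i, Q j i * (ε i * w j) ≤ 0 := by
    intro j
    have hle : ∀ i, Q j i * (ε i * w j) ≤ Q j i * |w j| := by
      intro i
      by_cases hij : i = j
      · subst hij
        rw [hεw i]
      · apply mul_le_mul_of_nonneg_left _ (hQoff j i (Ne.symm hij))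
        calc ε i * w j ≤ |ε i * w j| := le_abs_self _
          _ = |ε i| * |w j| := abs_mul _ _
          _ ≤ 1 * |w j| := by
              exact mul_le_mul_of_nonneg_right (hε1 i) (abs_nonneg _)
          _ = |w j| := one_mul _
    calc ∑ i, Q j i * (ε i * w j) ≤ ∑ i, Q j i * |w j| :=
          Finset.sum_le_sum fun i _ => hle i
      _ = (∑ i, Q j i) * |w j| := by rw [← Finset.sum_mul]
      _ = 0 := by rw [hQrow j, zero_mul]
  exact Finset.sum_nonpos fun j _ => hj j

/-- ℓ¹-contraction for two solutions of the forward equation `ρ' = Qᵀ ρ` of a Q-matrix. -/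
theorem qmatrix_l1_contraction {n : ℕ} (Q : Matrix (Fin n) (Fin n) ℝ)
    (hQoff : ∀ i j, i ≠ j → 0 ≤ Q i j)
    (hQrow : ∀ i, ∑ j, Q i j = 0)
    (ρ ρ' : ℝ → Fin n → ℝ)
    (hODE : ∀ t ≥ (0:ℝ), ∀ i, HasDerivAt (fun s => ρ s i) (∑ j, Q j i * ρ t j) t)
    (hODE' : ∀ t ≥ (0:ℝ), ∀ i, HasDerivAt (fun s => ρ' s i) (∑ j, Q j i * ρ' t j) t) :
    ∀ s t : ℝ, 0 ≤ s → s ≤ t →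
      ∑ i, |ρ t i - ρ' t i| ≤ ∑ i, |ρ s i - ρ' s i| := by
  intro s t hs hst
  set w : ℝ → Fin n → ℝ := fun z i => ρ z i - ρ' z i with hwdef
  have hw : ∀ z, 0 ≤ z → ∀ i, HasDerivAt (fun r => w r i) (∑ j, Q j i * w z j) z := by
    intro z hz i
    have := (hODE z hz i).sub (hODE' z hz i)
    have heq : (∑ j, Q j i * ρ z j) - (∑ j, Q j i * ρ' z j) = ∑ j, Q j i * w z j := by
      rw [← Finset.sum_sub_distrib]
      congr 1; ext j; simp [hwdef, mul_sub]
    rw [heq] at this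
    exact this
  set D : ℝ → Fin n → ℝ := fun z i =>
    if w z i = 0 then |∑ j, Q j i * w z j| else Real.sign (w z i) * ∑ j, Q j i * w z j
    with hDdef
  have hderiv : ∀ x ∈ Set.Ico s t,
      HasDerivWithinAt (fun z => ∑ i, |w z i|) (∑ i, D x i) (Set.Ici x) x := by
    intro x hx
    apply HasDerivWithinAt.fun_sum
    intro i _
    exact abs_hasDerivWithinAt_right (hw x (hs.trans hx.1) i)
  have hcont : ContinuousOn (fun z => ∑ i, |w z i|) (Set.Icc s t) := by
    apply continuousOn_finset_sum
    intro i _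
    intro z hz
    exact ((hw z (hs.trans hz.1) i).continuousAt.continuousWithinAt).abs
  have hbound : ∀ x ∈ Set.Ico s t, ∑ i, D x i ≤ 0 := by
    intro x _
    set ε : Fin n → ℝ := fun i =>
      if w x i = 0 then Real.sign (∑ j, Q j i * w x j) else Real.sign (w x i) with hεdef
    have hε1 : ∀ i, |ε i| ≤ 1 := by
      intro i
      have : ∀ y : ℝ, |Real.sign y| ≤ 1 := by
        intro y
        rcases lt_trichotomy y 0 with h | h | h
        · rw [Real.sign_of_neg h]; norm_num
        · rw [h, Real.sign_zero]; norm_num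
        · rw [Real.sign_of_pos h]; norm_num
      simp only [hεdef]
      split <;> exact this _
    have hsign_mul : ∀ y : ℝ, Real.sign y * y = |y| := by
      intro y
      rcases lt_trichotomy y 0 with h | h | h
      · rw [Real.sign_of_neg h, abs_of_neg h]; ring
      · simp [h]
      · rw [Real.sign_of_pos h, abs_of_pos h]; ring
    have hεw : ∀ i, ε i * w x i = |w x i| := by
      intro i
      simp only [hεdef]
      by_cases h : w x i = 0
      · simp [h]
      · rw [if_neg h]; exact hsign_mul _
    have hD : ∀ i, D x i = ε i * ∑ j, Q j i * w x j := by
      intro i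
      simp only [hDdef, hεdef]
      by_cases h : w x i = 0
      · rw [if_pos h, if_pos h, hsign_mul]
      · rw [if_neg h, if_neg h]
    calc ∑ i, D x i = ∑ i, ε i * ∑ j, Q j i * w x j :=
          Finset.sum_congr rfl fun i _ => hD i
      _ ≤ 0 := qmatrix_key Q hQoff hQrow (w x) ε hε1 hεw
  have := image_le_of_deriv_right_le_deriv_boundary hcont hderiv
    (le_refl (∑ i, |w s i|)) continuousOn_const
    (fun x _ => hasDerivWithinAt_const x _ _) hbound
  exact this ⟨hst, le_refl t⟩
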